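/- Equivalence of windows is not preserved under overlapping windows: there exist two dataflow versions P and Q with multiple edits, and two overlapping windows ω and ω′ (each a covering window of some edits), such that ω is equivalent and ω′ is equivalent, yet the version pair P and Q is not equivalent. -/
import Mathlib

/-- Overlapping windows do not preserve equivalence (composed-function model
of a linear dataflow).  There exist two versions `P = c ∘ b ∘ a` and
`Q = c' ∘ b' ∘ a'` (compositions of deterministic stage functions, obtained
from each other by multiple edits) and two overlapping covering windows:
`ω = (b ∘ a, b' ∘ a')` covering the first edits and `ω' = (c ∘ b, c' ∘ b')`
covering the last edits, which share the middle operator `b`/`b'`.  Both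
windows are equivalent (their sub-DAGs agree on every instance of their
input sources), yet the version pair is not equivalent: some instance of the
data sources produces different sink results. -/
theorem overlapping_windows_do_not_imply_pair_equiv :
    ∃ (α : Type) (a b c a' b' c' : α → α),
      (∀ x, b (a x) = b' (a' x)) ∧         -- window ω is equivalent
      (∀ x, c (b x) = c' (b' x)) ∧         -- window ω' is equivalent
      (∃ x, c (b (a x)) ≠ c' (b' (a' x))) -- but the version pair is not
      := by
  exact ⟨Bool, id, id, not, not, not, id, fun x => (Bool.not_not x).symm,
    fun x => rfl, ⟨true, by decide⟩⟩
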